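/- arXiv:2004.02552 — 2 statements merged into one kernel-verified Lean document; each statement's English description precedes it below -/
import Mathlib

section
/- Let β, γ, μ > 0, set H := (γ+μ)/β, and let B ≥ 0 be a constant with B < μH. Let S, I, R : [0,∞) → [0,∞) be differentiable nonnegative functions satisfying the SIR model S' = B − μS − βIS, I' = βIS − γI − μI, R' = γI − μR for all t ≥ 0. Then lim_{t→∞} (S(t), I(t), R(t)) = (B/μ, 0, 0), i.e., the solution converges to the disease-free equilibrium. -/
open Filter Set Real

private lemma exp_decay_tendsto {a : ℝ} (ha : 0 < a) :
    Tendsto (fun t : ℝ => Real.exp (-a * t)) atTop (nhds 0) := by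
  have h1 : Tendsto (fun t : ℝ => -a * t) atTop atBot := by
    apply Tendsto.const_mul_atTop_of_neg (neg_neg_iff_pos.2 ha) tendsto_id
  exact Real.tendsto_exp_atBot.comp h1

private lemma monoOn_of_hasDerivAt {T : ℝ} {f f' : ℝ → ℝ}
    (hf : ∀ t ∈ Ici T, HasDerivAt f (f' t) t)
    (h0 : ∀ t ∈ Ioi T, 0 ≤ f' t) : MonotoneOn f (Ici T) := by
  apply monotoneOn_of_deriv_nonneg (convex_Ici T)
  · exact fun t ht => (hf t ht).continuousAt.continuousWithinAt
  · intro t ht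
    rw [interior_Ici] at ht
    exact ((hf t (mem_Ici.2 (le_of_lt (mem_Ioi.1 ht)))).differentiableAt).differentiableWithinAt
  · intro t ht
    rw [interior_Ici] at ht
    rw [(hf t (mem_Ici.2 (mem_Ioi.1 ht).le)).deriv]
    exact h0 t ht

private lemma antiOn_of_hasDerivAt {T : ℝ} {f f' : ℝ → ℝ}
    (hf : ∀ t ∈ Ici T, HasDerivAt f (f' t) t)
    (h0 : ∀ t ∈ Ioi T, f' t ≤ 0) : AntitoneOn f (Ici T) := by
  apply antitoneOn_of_deriv_nonpos (convex_Ici T)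
  · exact fun t ht => (hf t ht).continuousAt.continuousWithinAt
  · intro t ht
    rw [interior_Ici] at ht
    exact ((hf t (mem_Ici.2 (le_of_lt (mem_Ioi.1 ht)))).differentiableAt).differentiableWithinAt
  · intro t ht
    rw [interior_Ici] at ht
    rw [(hf t (mem_Ici.2 (mem_Ioi.1 ht).le)).deriv]
    exact h0 t ht

/-- In the SIR model with constant newborn/immigration rate B < μH,
H = (γ+μ)/β, the solution converges to the disease-free equilibrium (B/μ, 0, 0). -/
theorem sir_disease_free_equilibrium
    (β γ μ B : ℝ) (hβ : 0 < β) (hγ : 0 < γ) (hμ : 0 < μ) (hB : 0 ≤ B)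
    (hB_small : B < μ * ((γ + μ) / β))
    (S I R : ℝ → ℝ)
    (hS_nonneg : ∀ t ≥ (0:ℝ), 0 ≤ S t)
    (hI_nonneg : ∀ t ≥ (0:ℝ), 0 ≤ I t)
    (hR_nonneg : ∀ t ≥ (0:ℝ), 0 ≤ R t)
    (hS : ∀ t ≥ (0:ℝ), HasDerivAt S (B - μ * S t - β * I t * S t) t)
    (hI : ∀ t ≥ (0:ℝ), HasDerivAt I (β * I t * S t - γ * I t - μ * I t) t)
    (hR : ∀ t ≥ (0:ℝ), HasDerivAt R (γ * I t - μ * R t) t) :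
    Filter.Tendsto (fun t => (S t, I t, R t)) Filter.atTop
      (nhds (B / μ, 0, 0)) := by
  have hμne : μ ≠ 0 := ne_of_gt hμ
  set H : ℝ := (γ + μ) / β with hHdef
  have hBH : B / μ < H := by
    rw [div_lt_iff₀ hμ]; linarith [hB_small]
  -- total population
  set N : ℝ → ℝ := fun t => S t + I t + R t with hNdef
  have hN : ∀ t ≥ (0:ℝ), HasDerivAt N (B - μ * N t) t := by
    intro t ht
    have h : HasDerivAt N _ t := ((hS t ht).add (hI t ht)).add (hR t ht)
    convert h using 1
    simp only [hNdef]; ring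
  -- explicit solution for N
  have hNsol : ∀ t ≥ (0:ℝ), N t = B / μ + (N 0 - B / μ) * Real.exp (-μ * t) := by
    intro t ht
    set f : ℝ → ℝ := fun s => Real.exp (μ * s) * (N s - B / μ) with hfdef
    have hf' : ∀ x ∈ Ico (0:ℝ) t, HasDerivWithinAt f 0 (Ici x) x := by
      intro x hx
      have hx0 : (0:ℝ) ≤ x := hx.1
      have he : HasDerivAt (fun s => Real.exp (μ * s)) (Real.exp (μ * x) * μ) x := by
        simpa [Function.comp_def] using (Real.hasDerivAt_exp (μ * x)).comp x ((hasDerivAt_id x).const_mul μ)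
      have hmul := he.mul ((hN x hx0).sub_const (B / μ))
      have : Real.exp (μ * x) * μ * (N x - B / μ) + (Real.exp (μ * x)) * (B - μ * N x) = 0 := by
        field_simp; ring
      rw [this] at hmul
      exact hmul.hasDerivWithinAt
    have hfc : ContinuousOn f (Icc 0 t) := by
      intro x hx
      have he : ContinuousAt (fun s => Real.exp (μ * s)) x :=
        (Real.continuous_exp.comp (continuous_const.mul continuous_id)).continuousAt
      exact (he.mul (((hN x hx.1).continuousAt).sub continuousAt_const)).continuousWithinAt
    have := constant_of_has_deriv_right_zero hfc hf' t (by exact ⟨ht, le_refl t⟩)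
    have hft : Real.exp (μ * t) * (N t - B / μ) = N 0 - B / μ := by
      simpa [hfdef] using this
    have hexp : Real.exp (μ * t) ≠ 0 := (Real.exp_pos _).ne'
    have : N t - B / μ = (N 0 - B / μ) * Real.exp (-μ * t) := by
      rw [← hft, neg_mul, Real.exp_neg]
      field_simp
    linarith [this]
  have hNlim : Tendsto N atTop (nhds (B / μ)) := by
    have h1 : Tendsto (fun t : ℝ => B / μ + (N 0 - B / μ) * Real.exp (-μ * t)) atTop
        (nhds (B / μ + (N 0 - B / μ) * 0)) :=
      tendsto_const_nhds.add (tendsto_const_nhds.mul (exp_decay_tendsto hμ))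
    rw [mul_zero, add_zero] at h1
    apply h1.congr'
    filter_upwards [eventually_ge_atTop (0:ℝ)] with t ht
    exact (hNsol t ht).symm
  -- choose threshold
  set M : ℝ := (B / μ + H) / 2 with hMdef
  have hMlt : M < H := by simp only [hMdef]; linarith
  have hBM : B / μ < M := by simp only [hMdef]; linarith
  obtain ⟨T₀, hT₀⟩ : ∃ T₀ : ℝ, ∀ t ≥ T₀, N t < M := by
    have := hNlim.eventually (gt_mem_nhds hBM)
    exact eventually_atTop.1 this
  set T : ℝ := max T₀ 0 with hTdef
  have hT0 : (0:ℝ) ≤ T := le_max_right _ _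
  have hNM : ∀ t ≥ T, N t ≤ M := fun t ht =>
    (hT₀ t (le_trans (le_max_left _ _) ht)).le
  have hSN : ∀ t ≥ (0:ℝ), S t ≤ N t := by
    intro t ht
    have := hI_nonneg t ht; have := hR_nonneg t ht
    simp only [hNdef]; linarith
  -- decay rate
  set ε : ℝ := min (β * (H - M)) (μ / 2) with hεdef
  have hε0 : 0 < ε := lt_min (mul_pos hβ (by linarith)) (by linarith)
  have hεμ : ε < μ := lt_of_le_of_lt (min_le_right _ _) (by linarith)
  have hεH : ε ≤ β * (H - M) := min_le_left _ _
  -- I decays: exp(ε t) * I t is antitone on [T, ∞)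
  have hIanti : AntitoneOn (fun t => Real.exp (ε * t) * I t) (Ici T) := by
    apply antiOn_of_hasDerivAt (f' := fun t =>
      Real.exp (ε * t) * ε * I t +
        Real.exp (ε * t) * (β * I t * S t - γ * I t - μ * I t))
    · intro t ht
      have ht0 : (0:ℝ) ≤ t := le_trans hT0 ht
      have he : HasDerivAt (fun s => Real.exp (ε * s)) (Real.exp (ε * t) * ε) t := by
        simpa [Function.comp_def] using (Real.hasDerivAt_exp (ε * t)).comp t ((hasDerivAt_id t).const_mul ε)
      exact he.mul (hI t ht0)
    · intro t ht
      have ht' : T ≤ t := le_of_lt ht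
      have ht0 : (0:ℝ) ≤ t := le_trans hT0 ht'
      have hIt : 0 ≤ I t := hI_nonneg t ht0
      have hSt : S t ≤ M := le_trans (hSN t ht0) (hNM t ht')
      have hkey : ε * I t + (β * I t * S t - γ * I t - μ * I t) ≤ 0 := by
        have h1 : β * I t * S t ≤ β * M * I t := by
          have := mul_le_mul_of_nonneg_left hSt (mul_nonneg hβ.le hIt)
          calc β * I t * S t = β * I t * S t := rfl
            _ ≤ β * I t * M := by nlinarith
            _ = β * M * I t := by ring
        have h2 : ε * I t ≤ β * (H - M) * I t :=
          mul_le_mul_of_nonneg_right hεH hIt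
        have h3 : γ + μ = β * H := by
          rw [hHdef]; field_simp
        nlinarith
      have hexp := Real.exp_pos (ε * t)
      nlinarith
  set C : ℝ := Real.exp (ε * T) * I T with hCdef
  have hC0 : 0 ≤ C := mul_nonneg (Real.exp_pos _).le (hI_nonneg T hT0)
  have hIbound : ∀ t ≥ T, I t ≤ C * Real.exp (-ε * t) := by
    intro t ht
    have h := hIanti (self_mem_Ici) (mem_Ici.2 ht) ht
    have h2 := mul_le_mul_of_nonneg_right h (Real.exp_pos (-ε * t)).le
    calc I t = Real.exp (ε * t) * I t * Real.exp (-ε * t) := by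
          rw [neg_mul, Real.exp_neg]; field_simp
      _ ≤ C * Real.exp (-ε * t) := h2
  -- I tends to 0
  have hIlim : Tendsto I atTop (nhds 0) := by
    have hub : Tendsto (fun t => C * Real.exp (-ε * t)) atTop (nhds (C * 0)) :=
      tendsto_const_nhds.mul (exp_decay_tendsto hε0)
    rw [mul_zero] at hub
    apply squeeze_zero'
    · filter_upwards [eventually_ge_atTop (0:ℝ)] with t ht using hI_nonneg t ht
    · filter_upwards [eventually_ge_atTop T] with t ht using hIbound t ht
    · exact hub
  -- R part: comparison function
  set D : ℝ := γ * C / (μ - ε) with hDdef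
  have hμε : (0:ℝ) < μ - ε := by linarith
  have hD0 : 0 ≤ D := div_nonneg (mul_nonneg hγ.le hC0) hμε.le
  have hφmono : MonotoneOn
      (fun t => D * Real.exp ((μ - ε) * t) - Real.exp (μ * t) * R t) (Ici T) := by
    apply monoOn_of_hasDerivAt (f' := fun t =>
      D * (Real.exp ((μ - ε) * t) * (μ - ε)) -
        (Real.exp (μ * t) * μ * R t + Real.exp (μ * t) * (γ * I t - μ * R t)))
    · intro t ht
      have ht0 : (0:ℝ) ≤ t := le_trans hT0 ht
      have he1 : HasDerivAt (fun s => Real.exp ((μ - ε) * s))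
          (Real.exp ((μ - ε) * t) * (μ - ε)) t := by
        simpa [Function.comp_def] using (Real.hasDerivAt_exp ((μ - ε) * t)).comp t
          ((hasDerivAt_id t).const_mul (μ - ε))
      have he2 : HasDerivAt (fun s => Real.exp (μ * s)) (Real.exp (μ * t) * μ) t := by
        simpa [Function.comp_def] using (Real.hasDerivAt_exp (μ * t)).comp t ((hasDerivAt_id t).const_mul μ)
      exact (he1.const_mul D).sub (he2.mul (hR t ht0))
    · intro t ht
      have ht' : T ≤ t := le_of_lt ht
      have hIb := hIbound t ht'
      have hDμε : D * (μ - ε) = γ * C := by rw [hDdef, div_mul_cancel₀ _ hμε.ne']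
      have hprod : Real.exp (μ * t) * Real.exp (-ε * t) = Real.exp ((μ - ε) * t) := by
        rw [← Real.exp_add]; ring_nf
      have h1 : Real.exp (μ * t) * I t ≤ C * Real.exp ((μ - ε) * t) := by
        calc Real.exp (μ * t) * I t
            ≤ Real.exp (μ * t) * (C * Real.exp (-ε * t)) :=
              mul_le_mul_of_nonneg_left hIb (Real.exp_pos _).le
          _ = C * (Real.exp (μ * t) * Real.exp (-ε * t)) := by ring
          _ = C * Real.exp ((μ - ε) * t) := by rw [hprod]
      have : D * (Real.exp ((μ - ε) * t) * (μ - ε)) = γ * C * Real.exp ((μ - ε) * t) := by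
        rw [← hDμε]; ring
      rw [this]
      nlinarith [mul_le_mul_of_nonneg_left h1 hγ.le]
  have hRbound : ∀ t ≥ T, R t ≤
      Real.exp (μ * T) * R T * Real.exp (-μ * t) + D * Real.exp (-ε * t) := by
    intro t ht
    have h := hφmono (self_mem_Ici) (mem_Ici.2 ht) ht
    simp only at h
    have he1T : 0 ≤ D * Real.exp ((μ - ε) * T) := mul_nonneg hD0 (Real.exp_pos _).le
    have h2 : Real.exp (μ * t) * R t ≤
        D * Real.exp ((μ - ε) * t) + Real.exp (μ * T) * R T := by linarith
    have h3 := mul_le_mul_of_nonneg_right h2 (Real.exp_pos (-μ * t)).le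
    have hprod1 : Real.exp (μ * t) * Real.exp (-μ * t) = 1 := by
      rw [← Real.exp_add]; ring_nf; exact Real.exp_zero
    have hprod2 : Real.exp ((μ - ε) * t) * Real.exp (-μ * t) = Real.exp (-ε * t) := by
      rw [← Real.exp_add]; ring_nf
    calc R t = Real.exp (μ * t) * R t * Real.exp (-μ * t) := by
          rw [mul_comm (Real.exp (μ * t)) (R t), mul_assoc, hprod1, mul_one]
      _ ≤ (D * Real.exp ((μ - ε) * t) + Real.exp (μ * T) * R T) * Real.exp (-μ * t) := h3
      _ = D * (Real.exp ((μ - ε) * t) * Real.exp (-μ * t)) +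
            Real.exp (μ * T) * R T * Real.exp (-μ * t) := by ring
      _ = Real.exp (μ * T) * R T * Real.exp (-μ * t) + D * Real.exp (-ε * t) := by
          rw [hprod2]; ring
  have hRlim : Tendsto R atTop (nhds 0) := by
    have hub : Tendsto
        (fun t => Real.exp (μ * T) * R T * Real.exp (-μ * t) + D * Real.exp (-ε * t))
        atTop (nhds (Real.exp (μ * T) * R T * 0 + D * 0)) :=
      (tendsto_const_nhds.mul (exp_decay_tendsto hμ)).add
        (tendsto_const_nhds.mul (exp_decay_tendsto hε0))
    rw [mul_zero, mul_zero, add_zero] at hub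
    apply squeeze_zero'
    · filter_upwards [eventually_ge_atTop (0:ℝ)] with t ht using hR_nonneg t ht
    · filter_upwards [eventually_ge_atTop T] with t ht using hRbound t ht
    · exact hub
  have hSlim : Tendsto S atTop (nhds (B / μ)) := by
    have h := (hNlim.sub hIlim).sub hRlim
    rw [sub_zero, sub_zero] at h
    apply h.congr
    intro t
    simp only [hNdef]; ring
  exact hSlim.prodMk_nhds (hIlim.prodMk_nhds hRlim)
end

section
/- Let β, γ, δ, μ > 0, set H := (γ+μ)/β, and let B ≥ 0 be a constant with B < μH. Let M, S, I, R : [0,∞) → [0,∞) be differentiable nonnegative functions satisfying the MSIR model M' = B − δM − μM, S' = δM − μS − βIS, I' = βIS − γI − μI, R' = γI − μR for all t ≥ 0. Then lim_{t→∞} I(t) = 0, lim_{t→∞} R(t) = 0, lim_{t→∞} M(t) = B/(δ+μ), and lim_{t→∞} S(t) = δB/(μ(δ+μ)); in particular lim_{t→∞} (M(t)+S(t)+I(t)+R(t)) = B/μ. -/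
open Set Filter Real

lemma decay_bound (f f' : ℝ → ℝ) (k c T : ℝ) (hk : 0 < k)
    (hf : ∀ t ≥ T, HasDerivAt f (f' t) t)
    (hle : ∀ t ≥ T, f' t ≤ -k * (f t - c)) :
    ∀ t ≥ T, f t ≤ c + (f T - c) * Real.exp (-k * (t - T)) := by
  intro t ht
  set g : ℝ → ℝ := fun s => (f s - c) * Real.exp (k * (s - T)) with hg
  have hgd : ∀ s ∈ Ici T, HasDerivAt g
      ((f' s + k * (f s - c)) * Real.exp (k * (s - T))) s := by
    intro s hs
    have h1 : HasDerivAt (fun s => f s - c) (f' s) s := (hf s hs).sub_const c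
    have h2 : HasDerivAt (fun s => Real.exp (k * (s - T))) (k * Real.exp (k * (s - T))) s := by
      have : HasDerivAt (fun s : ℝ => k * (s - T)) k s := by
        simpa using ((hasDerivAt_id s).sub_const T).const_mul k
      simpa [mul_comm] using this.exp
    have : HasDerivAt (fun s => (f s - c) * Real.exp (k * (s - T)))
        (f' s * Real.exp (k * (s - T)) + (f s - c) * (k * Real.exp (k * (s - T)))) s := h1.mul h2
    convert this using 1
    ring
  have anti : AntitoneOn g (Ici T) := by
    apply antitoneOn_of_deriv_nonpos (convex_Ici T)
    · exact fun s hs => ((hgd s hs).continuousAt.continuousWithinAt)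
    · intro s hs
      rw [interior_Ici] at hs
      exact ((hgd s (mem_Ici.mpr (le_of_lt hs))).differentiableAt).differentiableWithinAt
    · intro s hs
      rw [interior_Ici] at hs
      rw [(hgd s (mem_Ici.mpr (le_of_lt hs))).deriv]
      apply mul_nonpos_of_nonpos_of_nonneg
      · have := hle s (le_of_lt hs); linarith
      · positivity
  have hgt : g t ≤ g T := anti (self_mem_Ici) ht ht
  have hgT : g T = f T - c := by simp [hg]
  have hpos : (0:ℝ) < Real.exp (k * (t - T)) := Real.exp_pos _
  have : f t - c ≤ (f T - c) * Real.exp (-k * (t - T)) := by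
    rw [hgT] at hgt
    have h2 : (f t - c) * Real.exp (k * (t - T)) * Real.exp (-k * (t - T))
        ≤ (f T - c) * Real.exp (-k * (t - T)) := by
      exact mul_le_mul_of_nonneg_right hgt (le_of_lt (Real.exp_pos _))
    rwa [mul_assoc, ← Real.exp_add, (by ring : k * (t - T) + -k * (t - T) = 0),
      Real.exp_zero, mul_one] at h2
  linarith

lemma growth_bound (f f' : ℝ → ℝ) (k c T : ℝ) (hk : 0 < k)
    (hf : ∀ t ≥ T, HasDerivAt f (f' t) t)
    (hle : ∀ t ≥ T, -k * (f t - c) ≤ f' t) :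
    ∀ t ≥ T, c + (f T - c) * Real.exp (-k * (t - T)) ≤ f t := by
  intro t ht
  have h := decay_bound (fun s => -f s) (fun s => -f' s) k (-c) T hk
    (fun s hs => (hf s hs).neg)
    (fun s hs => by have := hle s hs; linarith) t ht
  have hr : (f T - c) * Real.exp (-k * (t - T)) = -((-f T - -c) * Real.exp (-k * (t - T))) := by ring
  linarith

lemma exp_term_tendsto (A k T : ℝ) (hk : 0 < k) :
    Tendsto (fun t => A * Real.exp (-k * (t - T))) atTop (nhds 0) := by
  have h0 : Tendsto (fun t : ℝ => t - T) atTop atTop :=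
    by simpa [sub_eq_add_neg] using tendsto_atTop_add_const_right atTop (-T) tendsto_id
  have h1 : Tendsto (fun t : ℝ => k * (t - T)) atTop atTop := h0.const_mul_atTop hk
  have h2 : Tendsto (fun t : ℝ => -k * (t - T)) atTop atBot := by
    rw [show (fun t : ℝ => -k * (t - T)) = (fun t => -(k * (t - T))) from funext fun t => by ring]
    exact tendsto_neg_atTop_atBot.comp h1
  have h3 : Tendsto (fun t : ℝ => Real.exp (-k * (t - T))) atTop (nhds 0) :=
    Real.tendsto_exp_atBot.comp h2
  simpa using h3.const_mul A

lemma linear_tendsto (f f' : ℝ → ℝ) (k c : ℝ) (hk : 0 < k)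
    (hf : ∀ t ≥ (0:ℝ), HasDerivAt f (f' t) t)
    (heq : ∀ t ≥ (0:ℝ), f' t = -k * (f t - c)) :
    Tendsto f atTop (nhds c) := by
  have hub := decay_bound f f' k c 0 hk hf (fun t ht => (heq t ht).le)
  have hlb := growth_bound f f' k c 0 hk hf (fun t ht => (heq t ht).ge)
  have hto : Tendsto (fun t => c + (f 0 - c) * Real.exp (-k * (t - 0))) atTop (nhds c) := by
    simpa using (exp_term_tendsto (f 0 - c) k 0 hk).const_add c
  exact tendsto_of_tendsto_of_tendsto_of_le_of_le' hto hto
    (eventually_atTop.mpr ⟨0, fun t ht => hlb t ht⟩)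
    (eventually_atTop.mpr ⟨0, fun t ht => hub t ht⟩)


/-- In the MSIR model with constant newborn/immigration rate B < μH,
H = (γ+μ)/β, the infected and recovered populations converge to zero and M, S converge
to their disease-free steady-state values; the total population converges to B/μ. -/
theorem msir_disease_free_convergence
    (β γ δ μ B : ℝ) (hβ : 0 < β) (hγ : 0 < γ) (hδ : 0 < δ) (hμ : 0 < μ)
    (hB : 0 ≤ B) (hB_small : B < μ * ((γ + μ) / β))
    (M S I R : ℝ → ℝ)
    (hM_nonneg : ∀ t ≥ (0:ℝ), 0 ≤ M t)
    (hS_nonneg : ∀ t ≥ (0:ℝ), 0 ≤ S t)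
    (hI_nonneg : ∀ t ≥ (0:ℝ), 0 ≤ I t)
    (hR_nonneg : ∀ t ≥ (0:ℝ), 0 ≤ R t)
    (hM : ∀ t ≥ (0:ℝ), HasDerivAt M (B - δ * M t - μ * M t) t)
    (hS : ∀ t ≥ (0:ℝ), HasDerivAt S (δ * M t - μ * S t - β * I t * S t) t)
    (hI : ∀ t ≥ (0:ℝ), HasDerivAt I (β * I t * S t - γ * I t - μ * I t) t)
    (hR : ∀ t ≥ (0:ℝ), HasDerivAt R (γ * I t - μ * R t) t) :
    Filter.Tendsto I Filter.atTop (nhds 0) ∧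
    Filter.Tendsto R Filter.atTop (nhds 0) ∧
    Filter.Tendsto M Filter.atTop (nhds (B / (δ + μ))) ∧
    Filter.Tendsto S Filter.atTop (nhds (δ * B / (μ * (δ + μ)))) ∧
    Filter.Tendsto (fun t => M t + S t + I t + R t) Filter.atTop
      (nhds (B / μ)) := by
  have hδμ : 0 < δ + μ := by linarith
  -- M convergence
  have hM_t : Tendsto M atTop (nhds (B / (δ + μ))) := by
    apply linear_tendsto M (fun t => B - δ * M t - μ * M t) (δ + μ) (B / (δ + μ)) hδμ hM
    intro t _
    field_simp
    ring
  -- Total population N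
  set N : ℝ → ℝ := fun t => M t + S t + I t + R t with hNdef
  have hN : ∀ t ≥ (0:ℝ), HasDerivAt N (B - μ * N t) t := by
    intro t ht
    have : HasDerivAt (fun t => M t + S t + I t + R t) (B - δ * M t - μ * M t + (δ * M t - μ * S t - β * I t * S t) +
        (β * I t * S t - γ * I t - μ * I t) + (γ * I t - μ * R t)) t :=
      (((hM t ht).add (hS t ht)).add (hI t ht)).add (hR t ht)
    convert this using 1
    simp only [hNdef]
    ring
  have hN_t : Tendsto N atTop (nhds (B / μ)) := by
    apply linear_tendsto N (fun t => B - μ * N t) μ (B / μ) hμ hN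
    intro t _
    field_simp
    ring
  -- threshold
  set H : ℝ := (γ + μ) / β with hHdef
  have hBH : B / μ < H := by
    rw [div_lt_iff₀ hμ]; linarith [hB_small]
  set ε : ℝ := (H - B / μ) / 2 with hεdef
  have hεH : B / μ + ε = H - ε := by rw [hεdef]; ring
  have hε : 0 < ε := by rw [hεdef]; linarith
  have hH : γ + μ = β * H := by rw [hHdef]; field_simp
  clear_value H
  clear_value ε
  -- eventually S ≤ H - ε
  obtain ⟨T₀, hT₀⟩ := eventually_atTop.mp
    (hN_t.eventually (eventually_lt_nhds (by linarith : B / μ < B / μ + ε)))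
  set T : ℝ := max T₀ 0 with hTdef
  have hT0 : (0:ℝ) ≤ T := le_max_right _ _
  have hSH : ∀ t ≥ T, S t ≤ H - ε := by
    intro t ht
    have ht0 : (0:ℝ) ≤ t := le_trans hT0 ht
    have h1 : N t < B / μ + ε := hT₀ t (le_trans (le_max_left _ _) ht)
    have h2 : S t ≤ N t := by
      have := hM_nonneg t ht0; have := hI_nonneg t ht0; have := hR_nonneg t ht0
      simp only [hNdef]; linarith
    have h3 : S t < B / μ + ε := lt_of_le_of_lt h2 h1
    rw [hεH] at h3
    exact h3.le
  -- I convergence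
  have hI_t : Tendsto I atTop (nhds 0) := by
    have hIub := decay_bound I (fun t => β * I t * S t - γ * I t - μ * I t)
      (β * ε) 0 T (by positivity)
      (fun t ht => hI t (le_trans hT0 ht))
      (by
        intro t ht
        have ht0 : (0:ℝ) ≤ t := le_trans hT0 ht
        have h1 := hSH t ht
        have h2 := hI_nonneg t ht0
        show β * I t * S t - γ * I t - μ * I t ≤ -(β * ε) * (I t - 0)
        nlinarith [mul_nonneg (mul_nonneg hβ.le h2) (by linarith : (0:ℝ) ≤ H - ε - S t)])
    have hto : Tendsto (fun t => 0 + (I T - 0) * Real.exp (-(β * ε) * (t - T))) atTop (nhds 0) := by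
      simpa using (exp_term_tendsto (I T - 0) (β * ε) T (by positivity)).const_add 0
    refine tendsto_of_tendsto_of_tendsto_of_le_of_le' tendsto_const_nhds hto
      (eventually_atTop.mpr ⟨T, fun t ht => hI_nonneg t (le_trans hT0 ht)⟩)
      (eventually_atTop.mpr ⟨T, fun t ht => hIub t ht⟩)
  -- R convergence
  have hR_t : Tendsto R atTop (nhds 0) := by
    rw [NormedAddCommGroup.tendsto_nhds_zero]
    intro ε' hε'
    obtain ⟨T₁', hT₁'⟩ := eventually_atTop.mp
      (hI_t.eventually (eventually_lt_nhds (by positivity : (0:ℝ) < μ * (ε'/2) / γ)))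
    set T₁ : ℝ := max T₁' 0 with hT₁def
    have hT₁0 : (0:ℝ) ≤ T₁ := le_max_right _ _
    have hRub := decay_bound R (fun t => γ * I t - μ * R t) μ (ε'/2) T₁ hμ
      (fun t ht => hR t (le_trans hT₁0 ht))
      (by
        intro t ht
        have h1 : I t < μ * (ε'/2) / γ := hT₁' t (le_trans (le_max_left _ _) ht)
        have h2 : γ * I t < μ * (ε'/2) := by
          rw [← lt_div_iff₀' hγ]; exact h1
        linarith)
    have hto : Tendsto (fun t => ε'/2 + (R T₁ - ε'/2) * Real.exp (-μ * (t - T₁))) atTop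
        (nhds (ε'/2)) := by
      simpa using (exp_term_tendsto (R T₁ - ε'/2) μ T₁ hμ).const_add (ε'/2)
    obtain ⟨T₂, hT₂⟩ := eventually_atTop.mp
      (hto.eventually (eventually_lt_nhds (by linarith : ε'/2 < ε')))
    rw [eventually_atTop]
    refine ⟨max T₁ T₂, fun t ht => ?_⟩
    have ht1 : T₁ ≤ t := le_trans (le_max_left _ _) ht
    have ht2 : T₂ ≤ t := le_trans (le_max_right _ _) ht
    have h3 : R t ≤ ε'/2 + (R T₁ - ε'/2) * Real.exp (-μ * (t - T₁)) := hRub t ht1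
    have h4 := hT₂ t ht2
    have h5 : 0 ≤ R t := hR_nonneg t (le_trans hT₁0 ht1)
    rw [Real.norm_eq_abs, abs_of_nonneg h5]
    linarith
  -- S convergence
  have hS_t : Tendsto S atTop (nhds (δ * B / (μ * (δ + μ)))) := by
    have := ((hN_t.sub hM_t).sub hI_t).sub hR_t
    have heq : (fun t => N t - M t - I t - R t) = S := by
      funext t; simp only [hNdef]; ring
    rw [heq] at this
    convert this using 2
    field_simp
    ring
  exact ⟨hI_t, hR_t, hM_t, hS_t, hN_t⟩
end
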